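/- Scaling law: suppose a c.d.f. F on (0,∞) satisfies 1 - F(x) = α e^{-x} x^{N_r - N_t}(1+o(1)) as x → ∞ with α > 0 and N_r ≥ N_t. Then as K → ∞, N_t log₂(1 + (ρ/N_t) F^{-1}(K/(K+1))) = N_t log₂ ln K + N_t log₂ ρ - N_t log₂ N_t + O(ln ln K / ln K). -/

import Mathlib

open Real Filter Asymptotics

set_option maxHeartbeats 1000000
lemma aux_abs_log (u : ℝ) (h : |u| ≤ 1/2) : |Real.log (1+u)| ≤ 2*|u| := by
  have hu := abs_le.mp h
  have h1 : (0:ℝ) < 1 + u := by linarith [hu.1]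
  rw [abs_le]
  constructor
  · rw [Real.le_log_iff_exp_le h1]
    have ha : 1 + 2*|u| ≤ Real.exp (2*|u|) := by
      have := Real.add_one_le_exp (2*|u|); linarith
    have hb : Real.exp (-(2*|u|)) * (1 + 2*|u|) ≤ 1 := by
      calc Real.exp (-(2*|u|)) * (1 + 2*|u|)
          ≤ Real.exp (-(2*|u|)) * Real.exp (2*|u|) :=
            mul_le_mul_of_nonneg_left ha (Real.exp_pos _).le
        _ = 1 := by rw [← Real.exp_add]; simp
    have hc : 1 ≤ (1+u)*(1+2*|u|) := by
      rcases le_or_gt 0 u with h' | h'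
      · rw [abs_of_nonneg h']; nlinarith
      · rw [abs_of_neg h']; nlinarith
    have hd : (0:ℝ) < 1 + 2*|u| := by positivity
    nlinarith [Real.exp_pos (-(2*|u|))]
  · have h2 := Real.log_le_sub_one_of_pos h1
    linarith [le_abs_self u, abs_nonneg u]


theorem stmt18 (Nr Nt : ℕ) (hNt : 1 ≤ Nt) (hNr : Nt ≤ Nr) (ρ : ℝ) (hρ : 0 < ρ)
    (α : ℝ) (hα : 0 < α)
    (F : ℝ → ℝ) (hFcont : Continuous F) (hFmono : StrictMono F)
    (htail : Tendsto (fun x : ℝ => (1 - F x) / (α * Real.exp (-x) * x ^ (Nr - Nt)))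
      atTop (nhds 1))
    (q : ℕ → ℝ) (hq : ∀ K : ℕ, 1 ≤ K → F (q K) = (K : ℝ) / (K + 1)) :
    (fun K : ℕ => (Nt : ℝ) * Real.logb 2 (1 + ρ / Nt * q K) -
        ((Nt : ℝ) * Real.logb 2 (Real.log K) + Nt * Real.logb 2 ρ -
          Nt * Real.logb 2 Nt))
      =O[atTop] fun K : ℕ => Real.log (Real.log K) / Real.log K := by

  set g : ℝ → ℝ := fun x => (1 - F x) / (α * Real.exp (-x) * x ^ (Nr - Nt)) with hg
  -- F x < 1 everywhere
  have hF1 : ∀ x, F x < 1 := by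
    intro x
    have hev : ∀ᶠ y in atTop, (1:ℝ)/2 < g y := htail.eventually (eventually_gt_nhds (by norm_num))
    obtain ⟨y, hy1, hy2, hy3⟩ : ∃ y, (1:ℝ)/2 < g y ∧ x < y ∧ 0 < y :=
      (hev.and ((eventually_gt_atTop x).and (eventually_gt_atTop 0))).exists
    have hden : 0 < α * Real.exp (-y) * y ^ (Nr - Nt) := by positivity
    have : 0 < 1 - F y := by
      have := (div_pos_iff.mp (lt_trans (by norm_num) hy1 : (0:ℝ) < g y))
      rcases this with ⟨h, _⟩ | ⟨_, h⟩
      · linarith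
      · linarith
    calc F x < F y := hFmono hy2
      _ < 1 := by linarith
  -- q K → ∞
  have hq_top : Tendsto q atTop atTop := by
    rw [tendsto_atTop]
    intro M
    have hr : Tendsto (fun K : ℕ => (K:ℝ)/(K+1)) atTop (nhds 1) := by
      have h0 : Tendsto (fun K : ℕ => 1 - 1/((K:ℝ)+1)) atTop (nhds 1) := by
        have := tendsto_one_div_add_atTop_nhds_zero_nat (𝕜 := ℝ)
        simpa using (tendsto_const_nhds (x := (1:ℝ)).sub this)
      refine h0.congr (fun K => ?_)
      have : (K:ℝ) + 1 ≠ 0 := by positivity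
      field_simp
      ring
    have hev : ∀ᶠ K : ℕ in atTop, F M < (K:ℝ)/(K+1) :=
      hr.eventually (eventually_gt_nhds (hF1 M))
    filter_upwards [hev, eventually_ge_atTop 1] with K h1 h2
    have : F M < F (q K) := by rw [hq K h2]; exact h1
    exact le_of_lt (hFmono.lt_iff_lt.mp this)
  have hgq : Tendsto (fun K => g (q K)) atTop (nhds 1) := htail.comp hq_top
  -- key equation
  have hgqpos : ∀ᶠ K : ℕ in atTop, (1:ℝ)/2 < g (q K) :=
    hgq.eventually (eventually_gt_nhds (by norm_num))
  have heqn : ∀ᶠ K : ℕ in atTop, q K = Real.log ((K:ℝ)+1) + Real.log α +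
      (Nr - Nt : ℕ) * Real.log (q K) + Real.log (g (q K)) := by
    filter_upwards [eventually_ge_atTop 1, hq_top.eventually_ge_atTop 1, hgqpos]
      with K hK1 hqK1 hgK
    have hqKpos : (0:ℝ) < q K := by linarith
    have hKpos : (0:ℝ) < (K:ℝ) + 1 := by positivity
    have hden : (0:ℝ) < α * Real.exp (-(q K)) * (q K) ^ (Nr - Nt) := by positivity
    have h1 : (1:ℝ) - F (q K) = 1/((K:ℝ)+1) := by
      rw [hq K hK1]; field_simp; ring
    have h2 : g (q K) * (α * Real.exp (-(q K)) * (q K) ^ (Nr - Nt)) = 1/((K:ℝ)+1) := by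
      rw [hg]; simp only []
      rw [div_mul_cancel₀ _ (ne_of_gt hden)]
      exact h1
    have h3 := congrArg Real.log h2
    rw [one_div, Real.log_inv] at h3
    rw [Real.log_mul (by linarith) (ne_of_gt hden), Real.log_mul (by positivity) (by positivity),
      Real.log_mul (ne_of_gt hα) (Real.exp_ne_zero _), Real.log_exp, Real.log_pow] at h3
    linarith
  -- log of g(qK) small
  have hlg : ∀ᶠ K : ℕ in atTop, Real.log (g (q K)) ∈ Set.Ioo (-1:ℝ) 1 := by
    have h0 : Tendsto (fun K => Real.log (g (q K))) atTop (nhds 0) := by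
      have := ((Real.continuousAt_log (one_ne_zero)).tendsto).comp hgq
      simpa [Function.comp_def] using this
    exact h0.eventually (Ioo_mem_nhds (by norm_num) (by norm_num))
  -- log qK ≤ qK / (2(m+1))
  have hsmall : ∀ᶠ K : ℕ in atTop, Real.log (q K) ≤ q K / (2*((Nr - Nt : ℕ)+1)) := by
    have hc : (0:ℝ) < 1/(2*(((Nr - Nt : ℕ):ℝ)+1)) := by positivity
    have h0 := Real.isLittleO_log_id_atTop.def hc
    filter_upwards [hq_top.eventually h0, hq_top.eventually_ge_atTop 1] with K h1 h2
    simp only [Real.norm_eq_abs, id] at h1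
    have : Real.log (q K) ≤ |Real.log (q K)| := le_abs_self _
    rw [abs_of_nonneg (by linarith : (0:ℝ) ≤ q K)] at h1
    calc Real.log (q K) ≤ 1/(2*(((Nr - Nt : ℕ):ℝ)+1)) * q K := by linarith
      _ = q K / (2*((Nr - Nt : ℕ)+1)) := by ring
  have hlogK_top : Tendsto (fun K : ℕ => Real.log K) atTop atTop :=
    Real.tendsto_log_atTop.comp tendsto_natCast_atTop_atTop
  have hLL_top : Tendsto (fun K : ℕ => Real.log (Real.log K)) atTop atTop :=
    Real.tendsto_log_atTop.comp hlogK_top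
  -- log(K+1) ≤ log K + 1 and log K ≤ log (K+1)
  have hlogK1 : ∀ᶠ K : ℕ in atTop, Real.log ((K:ℝ)+1) ≤ Real.log K + 1 ∧
      Real.log K ≤ Real.log ((K:ℝ)+1) := by
    filter_upwards [eventually_ge_atTop 1] with K hK1
    have hK1' : (1:ℝ) ≤ (K:ℝ) := by exact_mod_cast hK1
    constructor
    · calc Real.log ((K:ℝ)+1) ≤ Real.log (2*K) :=
            Real.log_le_log (by linarith) (by linarith)
        _ = Real.log 2 + Real.log K := Real.log_mul two_ne_zero (by linarith)
        _ ≤ Real.log K + 1 := by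
            have := Real.log_le_sub_one_of_pos (by norm_num : (0:ℝ) < 2); linarith
    · exact Real.log_le_log (by linarith) (by linarith)
  -- qK ≤ 3 log K
  have hqub : ∀ᶠ K : ℕ in atTop, q K ≤ 3 * Real.log K := by
    filter_upwards [heqn, hlg, hsmall, hlogK1, hq_top.eventually_ge_atTop 1,
      hlogK_top.eventually_ge_atTop (2*|Real.log α| + 4)] with K h1 h2 h3 h4 h5 h6
    have hm : ((Nr - Nt : ℕ):ℝ) * (q K / (2*((Nr - Nt : ℕ)+1))) ≤ q K / 2 := by
      have h7 : (0:ℝ) ≤ q K := by linarith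
      have h8 : (0:ℝ) ≤ ((Nr - Nt : ℕ):ℝ) := by positivity
      rw [mul_div_assoc', div_le_div_iff₀ (by positivity) (by norm_num)]
      nlinarith
    have hmlog : ((Nr - Nt : ℕ):ℝ) * Real.log (q K) ≤ q K / 2 := by
      have h8 : (0:ℝ) ≤ ((Nr - Nt : ℕ):ℝ) := by positivity
      calc ((Nr - Nt : ℕ):ℝ) * Real.log (q K) ≤ ((Nr - Nt : ℕ):ℝ) * (q K / (2*((Nr - Nt : ℕ)+1))) :=
            mul_le_mul_of_nonneg_left h3 h8
        _ ≤ q K / 2 := hm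
    have hla : Real.log α ≤ |Real.log α| := le_abs_self _
    linarith [h2.2, h4.1]
  set C1 : ℝ := 3*((Nr - Nt : ℕ):ℝ) + |Real.log α| + 2 with hC1
  have hdiff : ∀ᶠ K : ℕ in atTop, |q K - Real.log K| ≤ C1 * Real.log (Real.log K) := by
    filter_upwards [heqn, hlg, hqub, hlogK1, hq_top.eventually_ge_atTop 1,
      hlogK_top.eventually_ge_atTop 1, hLL_top.eventually_ge_atTop 1] with K h1 h2 h3 h4 h5 h6 h7
    set L := Real.log (K:ℝ)
    set LL := Real.log L
    have hm0 : (0:ℝ) ≤ ((Nr - Nt : ℕ):ℝ) := by positivity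
    have hlogq0 : 0 ≤ Real.log (q K) := Real.log_nonneg h5
    have hlogqub : Real.log (q K) ≤ 2 + LL := by
      calc Real.log (q K) ≤ Real.log (3 * L) := Real.log_le_log (by linarith) h3
        _ = Real.log 3 + LL := Real.log_mul (by norm_num) (by linarith)
        _ ≤ 2 + LL := by
            have := Real.log_le_sub_one_of_pos (by norm_num : (0:ℝ) < 3); linarith
    have hla : |Real.log α| ≤ |Real.log α| := le_refl _
    have h2a := h2.1
    have h2b := h2.2
    rw [abs_le]
    constructor
    · have : q K - L ≥ (L - (L+1)) + Real.log α + 0 + (-1) := by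
        have hml : ((Nr - Nt : ℕ):ℝ) * Real.log (q K) ≥ 0 := mul_nonneg hm0 hlogq0
        have := h4.2
        nlinarith [h1]
      have hla2 : -(|Real.log α|) ≤ Real.log α := neg_abs_le _
      have : q K - L ≥ -(|Real.log α| + 2) := by linarith
      have hC1pos : (0:ℝ) ≤ C1 := by rw [hC1]; positivity
      have hC1LL : |Real.log α| + 2 ≤ C1 * LL := by
        have h8 := mul_le_mul_of_nonneg_left h7 hC1pos
        have h9 := abs_nonneg (Real.log α)
        rw [mul_one] at h8
        rw [hC1] at h8 ⊢; linarith
      linarith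
    · have hml : ((Nr - Nt : ℕ):ℝ) * Real.log (q K) ≤ ((Nr - Nt : ℕ):ℝ) * (2 + LL) :=
        mul_le_mul_of_nonneg_left hlogqub hm0
      have hla2 : Real.log α ≤ |Real.log α| := le_abs_self _
      have ha1 : q K - L ≤ 1 + |Real.log α| + ((Nr - Nt : ℕ):ℝ) * (2 + LL) + 1 := by
        have := h4.1; nlinarith [h1]
      have ha2 : ((Nr - Nt : ℕ):ℝ) * (2 + LL) ≤ ((Nr - Nt : ℕ):ℝ) * (3 * LL) :=
        mul_le_mul_of_nonneg_left (by linarith) hm0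
      have ha3 : q K - L ≤ (3*((Nr - Nt : ℕ):ℝ)) * LL + |Real.log α| + 2 := by
        rw [mul_comm ((Nr - Nt : ℕ):ℝ) (3*LL)] at ha2
        linarith [ha1, ha2]
      have hb0 : (0:ℝ) ≤ |Real.log α| + 2 := by positivity
      have hb1 := mul_le_mul_of_nonneg_left h7 hb0
      rw [mul_one] at hb1
      have hC1LL : (3*((Nr - Nt : ℕ):ℝ)) * LL + |Real.log α| + 2 ≤ C1 * LL := by
        rw [hC1]; ring_nf; ring_nf at hb1; linarith
      linarith
  set C2 : ℝ := C1 + (Nt:ℝ)/ρ with hC2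
  have hNt0 : (0:ℝ) < (Nt:ℝ) := by exact_mod_cast hNt
  have hC2pos : (0:ℝ) ≤ C2 := by
    rw [hC2, hC1]; positivity
  have hhalf : ∀ᶠ K : ℕ in atTop,
      C2 * (Real.log (Real.log K) / Real.log K) ≤ 1/2 := by
    have hdiv : Tendsto (fun K : ℕ => Real.log (Real.log K)/Real.log K) atTop (nhds 0) := by
      have := (Real.isLittleO_log_id_atTop.tendsto_div_nhds_zero).comp hlogK_top
      simpa [Function.comp_def] using this
    have ht : Tendsto (fun K : ℕ => C2 * (Real.log (Real.log K)/Real.log K)) atTop (nhds 0) := by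
      simpa using hdiv.const_mul C2
    exact ht.eventually (eventually_le_nhds (by norm_num))
  have hlog2 : (0:ℝ) < Real.log 2 := Real.log_pos (by norm_num)
  rw [isBigO_iff]
  refine ⟨(Nt:ℝ) * (2*C2) / Real.log 2, ?_⟩
  filter_upwards [hdiff, hlogK_top.eventually_ge_atTop 1, hLL_top.eventually_ge_atTop 1,
    hq_top.eventually_ge_atTop 1, hhalf] with K h1 h2 h3 h4 h5
  set L := Real.log (K:ℝ) with hL
  set LL := Real.log L with hLL
  have hL0 : (0:ℝ) < L := by linarith
  have hq0 : (0:ℝ) < q K := by linarith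
  set u : ℝ := ((Nt:ℝ)/ρ + q K - L)/L with hu
  have hS : (0:ℝ) < (Nt:ℝ)/ρ + q K := by positivity
  -- bound on |u|
  have hub : |u| ≤ C2 * (LL/L) := by
    rw [hu, abs_div, abs_of_pos hL0]
    have h6 : |(Nt:ℝ)/ρ + q K - L| ≤ (Nt:ℝ)/ρ + C1 * LL := by
      have h7 : |(Nt:ℝ)/ρ| = (Nt:ℝ)/ρ := abs_of_pos (by positivity)
      rw [add_sub_assoc]
      calc |(Nt:ℝ)/ρ + (q K - L)| ≤ |(Nt:ℝ)/ρ| + |q K - L| := abs_add_le _ _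
        _ ≤ (Nt:ℝ)/ρ + C1 * LL := by rw [h7]; exact add_le_add le_rfl h1
    have h8 : (Nt:ℝ)/ρ + C1 * LL ≤ C2 * LL := by
      have h9 : (Nt:ℝ)/ρ * 1 ≤ (Nt:ℝ)/ρ * LL :=
        mul_le_mul_of_nonneg_left h3 (by positivity)
      rw [mul_one] at h9
      rw [hC2]; ring_nf; ring_nf at h9; linarith
    calc |(Nt:ℝ)/ρ + q K - L| / L ≤ (C2 * LL) / L := by
          gcongr
          linarith
      _ = C2 * (LL/L) := by ring
  have hu2 : |u| ≤ 1/2 := le_trans hub h5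
  have hlogbd := aux_abs_log u hu2
  -- identity for the expression
  have hA : (1:ℝ) + ρ/Nt * q K = ρ/Nt * ((Nt:ℝ)/ρ + q K) := by
    field_simp
  have h1u : (1:ℝ) + u = ((Nt:ℝ)/ρ + q K)/L := by
    rw [hu]; field_simp; ring
  have hlogA : Real.log (1 + ρ/Nt * q K) =
      Real.log ρ - Real.log Nt + Real.log ((Nt:ℝ)/ρ + q K) := by
    rw [hA, Real.log_mul (by positivity) (ne_of_gt hS),
      Real.log_div (ne_of_gt hρ) (ne_of_gt hNt0)]
  have hlogu : Real.log (1+u) = Real.log ((Nt:ℝ)/ρ + q K) - Real.log L := by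
    rw [h1u, Real.log_div (ne_of_gt hS) (ne_of_gt hL0)]
  have hexpr : (Nt:ℝ) * Real.logb 2 (1 + ρ/Nt * q K) -
      ((Nt:ℝ) * Real.logb 2 L + (Nt:ℝ) * Real.logb 2 ρ - (Nt:ℝ) * Real.logb 2 Nt) =
      (Nt:ℝ)/Real.log 2 * Real.log (1+u) := by
    simp only [Real.logb]
    rw [hlogA, hlogu]
    ring
  rw [Real.norm_eq_abs, Real.norm_eq_abs, hexpr]
  have hLLnn : (0:ℝ) ≤ LL/L := by positivity
  rw [abs_of_nonneg hLLnn, abs_mul, abs_of_pos (by positivity : (0:ℝ) < (Nt:ℝ)/Real.log 2)]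
  have hchain : |Real.log (1+u)| ≤ 2 * (C2 * (LL/L)) := by linarith
  calc (Nt:ℝ)/Real.log 2 * |Real.log (1+u)|
      ≤ (Nt:ℝ)/Real.log 2 * (2 * (C2 * (LL/L))) :=
        mul_le_mul_of_nonneg_left hchain (by positivity)
    _ = (Nt:ℝ) * (2*C2) / Real.log 2 * (LL/L) := by ring
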